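/- Let g : ℤ → ℤ^{N-1} be arbitrary and f : ℤ → ℤ satisfy f(m+1) - f(m) → +∞ as |m| → ∞. Then the set Λ = {(g(m), f(m)) : m ∈ ℤ} ⊂ ℝ^N is sparse. -/

import Mathlib

open scoped ENNReal

variable {E : Type*} [NormedAddCommGroup E]

/-- The separation constant of a set: infimum of distances between distinct points
(`∞` if the set has at most one element). -/
noncomputable def gap (S : Set E) : ℝ≥0∞ :=
  ⨅ (a : E) (_ : a ∈ S) (b : E) (_ : b ∈ S) (_ : a ≠ b), (‖a - b‖₊ : ℝ≥0∞)

/-- A set is sparse if for every `ε > 0` it admits a finite cover whose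
reciprocal separation constants sum to less than `ε` (with `1/∞ = 0`). -/
def Sparse (S : Set E) : Prop :=
  ∀ ε : ℝ, 0 < ε → ∃ (m : ℕ) (Λ : Fin m → Set E),
    S = (⋃ j, Λ j) ∧ ∑ j, (gap (Λ j))⁻¹ < ENNReal.ofReal ε

lemma gap_singleton (x : E) : gap ({x} : Set E) = ⊤ := by
  rw [eq_top_iff]
  refine le_iInf fun a => le_iInf fun ha => le_iInf fun b => le_iInf fun hb => le_iInf fun hab => ?_
  exact absurd (ha.trans hb.symm) hab

lemma abs_coord_le_norm {n : ℕ} (x : EuclideanSpace ℝ (Fin n)) (i : Fin n) : |x i| ≤ ‖x‖ := by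
  rw [EuclideanSpace.norm_eq, ← Real.sqrt_sq_eq_abs]
  apply Real.sqrt_le_sqrt
  calc x i ^ 2 = ‖x i‖ ^ 2 := by rw [Real.norm_eq_abs, sq_abs]
  _ ≤ ∑ j, ‖x j‖ ^ 2 :=
    Finset.single_le_sum (f := fun j => ‖x j‖ ^ 2) (fun j _ => sq_nonneg _) (Finset.mem_univ i)

lemma key_incr (f : ℤ → ℤ) (R : ℤ) (hR : 0 ≤ R) (a : ℤ) :
    ∀ b, a + 1 ≤ b → (∀ j, a ≤ j → j < b → R ≤ f (j + 1) - f j) → R ≤ f b - f a := by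
  refine Int.le_induction ?_ ?_
  · intro h; have := h a le_rfl (by omega); omega
  · intro b hb ih h
    have h1 := h b (by omega) (by omega)
    have h2 := ih fun j hj hj' => h j hj (by omega)
    omega

theorem sparse_graph_of_gap_growth (k : ℕ) (g : ℤ → Fin k → ℤ) (f : ℤ → ℤ)
    (hf : Filter.Tendsto (fun m : ℤ => f (m + 1) - f m) Filter.cofinite Filter.atTop) :
    Sparse {p : EuclideanSpace ℝ (Fin (k + 1)) |
      ∃ m : ℤ, p = WithLp.toLp 2 (Fin.snoc (fun i => (g m i : ℝ)) ((f m : ℝ)))} := by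
  intro ε hε
  obtain ⟨n, hn⟩ : ∃ n : ℕ, (n : ℝ≥0∞)⁻¹ < ENNReal.ofReal ε / 2 :=
    ENNReal.exists_inv_nat_lt
      (ENNReal.div_pos (ENNReal.ofReal_pos.mpr hε).ne' ENNReal.ofNat_ne_top).ne'
  have hn2 : 2 * (n : ℝ≥0∞)⁻¹ < ENNReal.ofReal ε := by
    calc 2 * (n : ℝ≥0∞)⁻¹ < 2 * (ENNReal.ofReal ε / 2) :=
          ENNReal.mul_lt_mul_right (by norm_num) (by norm_num) hn
    _ = ENNReal.ofReal ε := ENNReal.mul_div_cancel' (by norm_num) (by norm_num)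
  set pt : ℤ → EuclideanSpace ℝ (Fin (k + 1)) :=
    fun m => WithLp.toLp 2 (Fin.snoc (fun i => (g m i : ℝ)) ((f m : ℝ))) with hpt
  have hev : {m : ℤ | ¬ (n : ℤ) ≤ f (m + 1) - f m}.Finite :=
    hf.eventually (Filter.eventually_ge_atTop (n : ℤ))
  obtain ⟨M, hM⟩ : ∃ M : ℕ, ∀ m : ℤ, (M : ℤ) ≤ |m| → (n : ℤ) ≤ f (m + 1) - f m := by
    obtain ⟨C, hC⟩ := (hev.image (fun m => |m|)).bddAbove
    refine ⟨C.toNat + 1, fun m hm => ?_⟩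
    by_contra h
    have : |m| ≤ C := hC ⟨m, h, rfl⟩
    omega
  have tail_gap : ∀ (a b : ℤ), (n:ℤ) ≤ f b - f a →
      (n : ℝ≥0∞) ≤ (‖pt a - pt b‖₊ : ℝ≥0∞) := by
    intro a b hab
    rw [← ENNReal.coe_natCast, ENNReal.coe_le_coe, ← NNReal.coe_le_coe]
    push_cast
    calc (n : ℝ) ≤ |(f a : ℝ) - (f b : ℝ)| := by
          rw [abs_sub_comm, ← Int.cast_sub]
          calc (n:ℝ) ≤ ((f b - f a : ℤ) : ℝ) := by exact_mod_cast hab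
          _ ≤ |((f b - f a : ℤ) : ℝ)| := le_abs_self _
    _ = |(pt a - pt b) (Fin.last k)| := by
          simp [hpt, Fin.snoc_last, PiLp.sub_apply]
    _ ≤ ‖pt a - pt b‖ := abs_coord_le_norm _ _
  set Tp : Set (EuclideanSpace ℝ (Fin (k + 1))) := {p | ∃ m : ℤ, (M:ℤ) < m ∧ p = pt m} with hTp
  set Tm : Set (EuclideanSpace ℝ (Fin (k + 1))) := {p | ∃ m : ℤ, m < -(M:ℤ) ∧ p = pt m} with hTm
  set Λ0 : Fin (2 * M + 1) → Set (EuclideanSpace ℝ (Fin (k + 1))) :=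
    fun j => {pt ((j : ℤ) - M)} with hΛ0
  -- gap bounds on the tails
  have gapTp : (n : ℝ≥0∞) ≤ gap Tp := by
    refine le_iInf fun a => le_iInf fun ha => le_iInf fun b => le_iInf fun hb =>
      le_iInf fun hab => ?_
    obtain ⟨m1, hm1, rfl⟩ := ha
    obtain ⟨m2, hm2, rfl⟩ := hb
    rcases lt_trichotomy m1 m2 with h12 | h12 | h12
    · refine tail_gap m1 m2 (key_incr f n n.cast_nonneg m1 m2 (by omega) fun j hj _ => ?_)
      exact hM j (by rw [abs_of_nonneg (by omega)]; omega)
    · exact absurd (by rw [h12]) hab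
    · rw [← nnnorm_neg, neg_sub]
      refine tail_gap m2 m1 (key_incr f n n.cast_nonneg m2 m1 (by omega) fun j hj _ => ?_)
      exact hM j (by rw [abs_of_nonneg (by omega)]; omega)
  have gapTm : (n : ℝ≥0∞) ≤ gap Tm := by
    refine le_iInf fun a => le_iInf fun ha => le_iInf fun b => le_iInf fun hb =>
      le_iInf fun hab => ?_
    obtain ⟨m1, hm1, rfl⟩ := ha
    obtain ⟨m2, hm2, rfl⟩ := hb
    rcases lt_trichotomy m1 m2 with h12 | h12 | h12
    · refine tail_gap m1 m2 (key_incr f n n.cast_nonneg m1 m2 (by omega) fun j hj hj' => ?_)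
      exact hM j (by rw [abs_of_nonpos (by omega)]; omega)
    · exact absurd (by rw [h12]) hab
    · rw [← nnnorm_neg, neg_sub]
      refine tail_gap m2 m1 (key_incr f n n.cast_nonneg m2 m1 (by omega) fun j hj hj' => ?_)
      exact hM j (by rw [abs_of_nonpos (by omega)]; omega)
  refine ⟨2 * M + 1 + 1 + 1, Fin.snoc (Fin.snoc Λ0 Tp) Tm, ?_, ?_⟩
  · ext p
    simp only [Set.mem_setOf_eq, Set.mem_iUnion]
    constructor
    · rintro ⟨m, rfl⟩
      rcases lt_trichotomy m (-(M:ℤ)) with hm | hm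
      · exact ⟨Fin.last _, by rw [Fin.snoc_last]; exact ⟨m, hm, rfl⟩⟩
      · rcases le_or_gt m M with hm2 | hm2
        · refine ⟨((⟨(m + M).toNat, by omega⟩ : Fin (2*M+1)).castSucc).castSucc, ?_⟩
          rw [Fin.snoc_castSucc, Fin.snoc_castSucc, hΛ0]
          simp only [Set.mem_singleton_iff, Fin.val_mk]
          rw [show ((m + (M:ℤ)).toNat : ℤ) - M = m by omega]
        · refine ⟨(Fin.last (2*M+1)).castSucc, ?_⟩
          rw [Fin.snoc_castSucc, Fin.snoc_last]
          exact ⟨m, hm2, rfl⟩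
    · rintro ⟨j, hj⟩
      induction j using Fin.lastCases with
      | last =>
        rw [Fin.snoc_last] at hj
        obtain ⟨m, _, rfl⟩ := hj
        exact ⟨m, rfl⟩
      | cast j =>
        rw [Fin.snoc_castSucc] at hj
        induction j using Fin.lastCases with
        | last =>
          rw [Fin.snoc_last] at hj
          obtain ⟨m, _, rfl⟩ := hj
          exact ⟨m, rfl⟩
        | cast j =>
          rw [Fin.snoc_castSucc] at hj
          exact ⟨(j : ℤ) - M, hj⟩
  · rw [Fin.sum_univ_castSucc, Fin.sum_univ_castSucc]
    simp only [Fin.snoc_castSucc, Fin.snoc_last]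
    have h0 : ∑ j : Fin (2 * M + 1), (gap (Λ0 j))⁻¹ = 0 := by
      refine Finset.sum_eq_zero fun j _ => ?_
      rw [hΛ0, gap_singleton, ENNReal.inv_top]
    rw [h0, zero_add]
    calc (gap Tp)⁻¹ + (gap Tm)⁻¹ ≤ (n : ℝ≥0∞)⁻¹ + (n : ℝ≥0∞)⁻¹ :=
          add_le_add (ENNReal.inv_le_inv' gapTp) (ENNReal.inv_le_inv' gapTm)
    _ = 2 * (n : ℝ≥0∞)⁻¹ := (two_mul _).symm
    _ < ENNReal.ofReal ε := hn2
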